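/- None of the rational numbers 13, 17, and 221 = 13·17 is a square in ℚ, but for every prime number p, at least one of 13, 17, 221 is a square in the p-adic field ℚ_p (and all three are squares in ℝ). (This is the verification that the ℚ-scheme Spec ℚ(√13) ⊔ Spec ℚ(√17) ⊔ Spec ℚ(√(13·17)) has points over every completion of ℚ but no ℚ-rational point, the paper's 'typical counterexample' to the Hasse principle for finite schemes.) -/

import Mathlib

open Polynomial

/-- Hensel: if `‖b^2 - u‖ < ‖2*b‖^2` in `ℤ_[p]`, then `u` is a square in `ℚ_[p]`. -/
lemma aux_hensel_sq {p : ℕ} [Fact p.Prime] (u b : ℤ_[p])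
    (h : ‖b ^ 2 - u‖ < ‖2 * b‖ ^ 2) : IsSquare ((u : ℚ_[p])) := by
  obtain ⟨z, hz, -⟩ := hensels_lemma (F := X ^ 2 - C u) (a := b) (by simpa [one_add_one_eq_two] using h)
  have hz' : z ^ 2 = u := by
    have := hz; simp [sub_eq_zero] at this; exact this
  refine ⟨(z : ℚ_[p]), ?_⟩
  rw [← hz']; push_cast; ring

lemma aux_int_sq {p : ℕ} [Fact p.Prime] (hp : p ≠ 2) (n b : ℤ)
    (hn : ¬ (p : ℤ) ∣ n) (hb : (p : ℤ) ∣ (b ^ 2 - n)) : IsSquare ((n : ℚ_[p])) := by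
  have hprime : Prime (p : ℤ) := Int.prime_iff_natAbs_prime.2 (by simpa using (Fact.out : p.Prime))
  have hpb : ¬ (p : ℤ) ∣ b := by
    intro hd
    have h2 : (p:ℤ) ∣ b ^ 2 := Dvd.dvd.pow hd (by norm_num)
    exact hn (by have := dvd_sub h2 hb; simpa using this)
  have hp2b : ¬ (p : ℤ) ∣ 2 * b := by
    intro hd
    rcases hprime.dvd_mul.1 hd with h | h
    · have h2 := Int.le_of_dvd (by norm_num) h
      have h3 : 2 ≤ (p:ℤ) := by exact_mod_cast (Fact.out : p.Prime).two_le
      have : p = 2 := by omega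
      exact hp this
    · exact hpb h
  have key : IsSquare ((n : ℤ_[p]) : ℚ_[p]) := by
    apply aux_hensel_sq (u := (n : ℤ_[p])) (b := (b : ℤ_[p]))
    have h1 : ‖((b:ℤ_[p]) ^ 2 - (n:ℤ_[p]))‖ < 1 := by
      have e : ((b ^ 2 - n : ℤ) : ℤ_[p]) = (b:ℤ_[p]) ^ 2 - (n:ℤ_[p]) := by push_cast; ring
      rw [← e]
      exact (PadicInt.norm_int_lt_one_iff_dvd _).2 hb
    have h2 : ‖(2 * (b:ℤ_[p]))‖ = 1 := by
      have e : ((2 * b : ℤ) : ℤ_[p]) = 2 * (b:ℤ_[p]) := by push_cast; ring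
      rw [← e]
      refine le_antisymm (PadicInt.norm_le_one _) (not_lt.1 ?_)
      rw [PadicInt.norm_int_lt_one_iff_dvd]
      exact hp2b
    rw [h2]; simpa using h1
  simpa using key

lemma aux_zmod_sq {p : ℕ} [Fact p.Prime] (hp : p ≠ 2) (n : ℕ)
    (hn : ¬ p ∣ n) (h : IsSquare ((n : ZMod p))) : IsSquare ((n : ℚ_[p])) := by
  haveI : NeZero p := ⟨(Fact.out : p.Prime).ne_zero⟩
  obtain ⟨y, hy⟩ := h
  have key := aux_int_sq (p := p) hp (n : ℤ) (y.val : ℤ)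
    (by rwa [Int.natCast_dvd_natCast])
    (by
      rw [← ZMod.intCast_zmod_eq_zero_iff_dvd]
      push_cast
      simp only [ZMod.natCast_val, ZMod.cast_id]
      rw [hy]; ring)
  simpa using key

/-- None of 13, 17, 221 = 13·17 is a square in ℚ, but for every prime p at least
one of them is a square in ℚ_p, and all three are squares in ℝ: the counterexample
to the Hasse principle for the finite ℚ-scheme
Spec ℚ(√13) ⊔ Spec ℚ(√17) ⊔ Spec ℚ(√221). -/
theorem stmt_11 :
    (¬ IsSquare (13 : ℚ)) ∧ (¬ IsSquare (17 : ℚ)) ∧ (¬ IsSquare (221 : ℚ)) ∧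
    (∀ (p : ℕ) [Fact p.Prime],
      IsSquare (13 : ℚ_[p]) ∨ IsSquare (17 : ℚ_[p]) ∨ IsSquare (221 : ℚ_[p])) ∧
    (IsSquare (13 : ℝ) ∧ IsSquare (17 : ℝ) ∧ IsSquare (221 : ℝ)) := by
  refine ⟨?_, ?_, ?_, ?_, ?_, ?_, ?_⟩
  · rw [show (13 : ℚ) = ((13 : ℕ) : ℚ) by norm_num, Rat.isSquare_natCast_iff]
    rintro ⟨m, hm⟩
    have h1 : m ≤ 13 := by nlinarith
    interval_cases m <;> omega
  · rw [show (17 : ℚ) = ((17 : ℕ) : ℚ) by norm_num, Rat.isSquare_natCast_iff]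
    rintro ⟨m, hm⟩
    have h1 : m ≤ 17 := by nlinarith
    interval_cases m <;> omega
  · rw [show (221 : ℚ) = ((221 : ℕ) : ℚ) by norm_num, Rat.isSquare_natCast_iff]
    rintro ⟨m, hm⟩
    have h1 : m ≤ 221 := by nlinarith
    interval_cases m <;> omega
  · intro p _
    by_cases h2 : p = 2
    · subst h2
      refine Or.inr (Or.inl ?_)
      have key : IsSquare (((17 : ℤ_[2]) : ℚ_[2])) := by
        apply aux_hensel_sq (u := (17 : ℤ_[2])) (b := 1)
        have e : (1 : ℤ_[2]) ^ 2 - 17 = (2 : ℤ_[2]) ^ 4 * (-1) := by ring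
        have hn2 : ‖(2 : ℤ_[2])‖ = 2⁻¹ := by
          have := PadicInt.norm_p (p := 2)
          simpa using this
        rw [e, norm_mul, norm_pow, mul_one, hn2]
        simp only [norm_neg, norm_one, mul_one]
        norm_num
      rw [show ((17 : ℤ_[2]) : ℚ_[2]) = 17 from PadicInt.coe_natCast (p := 2) 17] at key
      exact key
    by_cases h13 : p = 13
    · subst h13
      refine Or.inr (Or.inl ?_)
      have key := aux_int_sq (p := 13) (by norm_num) 17 2 (by decide) (by decide)
      simpa using key
    by_cases h17 : p = 17
    · subst h17
      refine Or.inl ?_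
      have key := aux_int_sq (p := 17) (by norm_num) 13 8 (by decide) (by decide)
      simpa using key
    · -- general odd case
      have hp : p.Prime := Fact.out
      have hd13 : ¬ p ∣ 13 := fun h => h13 ((Nat.prime_dvd_prime_iff_eq hp (by norm_num)).1 h)
      have hd17 : ¬ p ∣ 17 := fun h => h17 ((Nat.prime_dvd_prime_iff_eq hp (by norm_num)).1 h)
      have hd221 : ¬ p ∣ 221 := by
        intro h
        have : p ∣ 13 * 17 := by norm_num at h ⊢; exact h
        rcases hp.dvd_mul.1 this with h | h
        · exact hd13 h
        · exact hd17 h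
      have hF : ringChar (ZMod p) ≠ 2 := by
        rw [ZMod.ringChar_zmod_n]; exact h2
      have hz13 : ((13 : ℕ) : ZMod p) ≠ 0 := by
        rw [Ne, ZMod.natCast_eq_zero_iff]; exact hd13
      have hz17 : ((17 : ℕ) : ZMod p) ≠ 0 := by
        rw [Ne, ZMod.natCast_eq_zero_iff]; exact hd17
      rcases FiniteField.pow_dichotomy hF hz13 with e13 | e13
      · exact Or.inl (aux_zmod_sq h2 13 hd13
          ((FiniteField.isSquare_iff hF hz13).2 e13))
      rcases FiniteField.pow_dichotomy hF hz17 with e17 | e17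
      · exact Or.inr (Or.inl (aux_zmod_sq h2 17 hd17
          ((FiniteField.isSquare_iff hF hz17).2 e17)))
      refine Or.inr (Or.inr (aux_zmod_sq h2 221 hd221 ?_))
      rw [FiniteField.isSquare_iff hF (by rw [Ne, ZMod.natCast_eq_zero_iff]; exact hd221)]
      have e : ((221 : ℕ) : ZMod p) = ((13 : ℕ) : ZMod p) * ((17 : ℕ) : ZMod p) := by
        push_cast; norm_num
      rw [e, mul_pow, e13, e17]
      ring
  · exact ⟨Real.sqrt 13, (Real.mul_self_sqrt (by norm_num : (0:ℝ) ≤ 13)).symm⟩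
  · exact ⟨Real.sqrt 17, (Real.mul_self_sqrt (by norm_num : (0:ℝ) ≤ 17)).symm⟩
  · exact ⟨Real.sqrt 221, (Real.mul_self_sqrt (by norm_num : (0:ℝ) ≤ 221)).symm⟩
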